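/- Let M_α = diag(1,-1,-1,-1,-1) and M_β = diag(-1,-1,-1,1,-1) in SO(5). Under the double cover 𝔭 : Spin(5) → SO(5), the preimages are 𝔭⁻¹(M_α) = {± e₂·e₃·e₄·e₅} and 𝔭⁻¹(M_β) = {± e₁·e₂·e₃·e₅}, and for any choice of lifts M̂_α ∈ 𝔭⁻¹(M_α) and M̂_β ∈ 𝔭⁻¹(M_β) one has M̂_α · M̂_β = - M̂_β · M̂_α; in particular no choice of lifts makes them commute. -/

import Mathlib

open CliffordAlgebra

/-- The standard negative-definite quadratic form on `ℝ⁵` (so that `eᵢ² = -1` in the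
Clifford algebra), whose Clifford algebra contains `Spin(5) = spinGroup Q5`. -/
noncomputable def Q5 : QuadraticForm ℝ (Fin 5 → ℝ) :=
  QuadraticMap.weightedSumSquares ℝ (fun _ : Fin 5 => (-1 : ℝ))

/-- The standard orthonormal basis vectors of `ℝ⁵`. -/
def stdVec (i : Fin 5) : Fin 5 → ℝ := fun j => if j = i then 1 else 0

/-- `w ∈ Spin(5)` is a lift of `M ∈ SO(5)` under the double cover
`𝔭 : Spin(5) → SO(5)` if the (twisted) adjoint action of `w` on vectors is `M`,
i.e. `w · x · w⁻¹ = M x` for all `x ∈ ℝ⁵` (for `w` in the spin group `w⁻¹ = star w`). -/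
noncomputable def IsLiftOf (w : CliffordAlgebra Q5) (M : Matrix (Fin 5) (Fin 5) ℝ) : Prop :=
  ∀ x : Fin 5 → ℝ, w * ι Q5 x * star w = ι Q5 (M.mulVec x)

/-- `M_α = diag(1,-1,-1,-1,-1)`. -/
noncomputable def Malpha : Matrix (Fin 5) (Fin 5) ℝ := Matrix.diagonal ![1, -1, -1, -1, -1]

/-- `M_β = diag(-1,-1,-1,1,-1)`. -/
noncomputable def Mbeta : Matrix (Fin 5) (Fin 5) ℝ := Matrix.diagonal ![-1, -1, -1, 1, -1]

/-- `u = e₂e₃e₄e₅`. -/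
noncomputable def uElt : CliffordAlgebra Q5 :=
  ι Q5 (stdVec 1) * ι Q5 (stdVec 2) * ι Q5 (stdVec 3) * ι Q5 (stdVec 4)

/-- `v = e₁e₂e₃e₅`. -/
noncomputable def vElt : CliffordAlgebra Q5 :=
  ι Q5 (stdVec 0) * ι Q5 (stdVec 1) * ι Q5 (stdVec 2) * ι Q5 (stdVec 4)


noncomputable def ee (i : Fin 5) : CliffordAlgebra Q5 := ι Q5 (stdVec i)

lemma Q5_apply (x : Fin 5 → ℝ) : Q5 x = -(∑ i, x i * x i) := by
  simp [Q5, QuadraticMap.weightedSumSquares_apply, smul_eq_mul, Finset.sum_neg_distrib]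

lemma Q5_stdVec (i : Fin 5) : Q5 (stdVec i) = -1 := by
  rw [Q5_apply]; norm_num [stdVec]

lemma sum_std_mul {i j : Fin 5} (h : i ≠ j) : ∀ k, stdVec i k * stdVec j k = 0 := by
  intro k
  simp only [stdVec]
  split <;> split <;> simp_all

lemma ortho {i j : Fin 5} (h : i ≠ j) : Q5.IsOrtho (stdVec i) (stdVec j) := by
  rw [QuadraticMap.isOrtho_def, Q5_apply, Q5_apply, Q5_apply]
  have : ∀ k, (stdVec i k + stdVec j k) * (stdVec i k + stdVec j k)
      = stdVec i k * stdVec i k + stdVec j k * stdVec j k := by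
    intro k; nlinarith [sum_std_mul h k]
  simp only [Pi.add_apply, this, Finset.sum_add_distrib]
  ring

@[simp] lemma e_sq (i : Fin 5) : ee i * ee i = -1 := by
  rw [ee, ι_sq_scalar, Q5_stdVec, map_neg, map_one]

@[simp] lemma e_sq' (i : Fin 5) (x : CliffordAlgebra Q5) : ee i * (ee i * x) = -x := by
  rw [← mul_assoc, e_sq, neg_one_mul]

lemma e_anti {i j : Fin 5} (h : i ≠ j) : ee i * ee j = -(ee j * ee i) :=
  ι_mul_ι_comm_of_isOrtho (ortho h)

@[simp] lemma e_swap {i j : Fin 5} (h : j < i) : ee i * ee j = -(ee j * ee i) :=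
  e_anti h.ne'

@[simp] lemma e_swap' {i j : Fin 5} (h : j < i) (x : CliffordAlgebra Q5) :
    ee i * (ee j * x) = -(ee j * (ee i * x)) := by
  rw [← mul_assoc, e_swap h, ← mul_assoc, neg_mul]

abbrev G5 := Fin 5 → ZMod 2

def dd (i : Fin 5) : G5 := fun j => if j = i then 1 else 0

noncomputable def prodE (l : List (Fin 5)) : CliffordAlgebra Q5 := (l.map ee).prod

def lst (b : G5) : List (Fin 5) := (List.finRange 5).filter (fun j => b j = 1)

noncomputable def eb (b : G5) : CliffordAlgebra Q5 := prodE (lst b)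

@[simp] lemma prodE_nil : prodE [] = 1 := rfl
@[simp] lemma prodE_cons (i : Fin 5) (l : List (Fin 5)) :
    prodE (i :: l) = ee i * prodE l := by simp [prodE]
lemma prodE_append (l₁ l₂ : List (Fin 5)) :
    prodE (l₁ ++ l₂) = prodE l₁ * prodE l₂ := by simp [prodE]

lemma neg_one_pow_mul_self (c : ℕ) : ((-1 : ℝ) ^ c) * ((-1 : ℝ) ^ c) = 1 := by
  rw [← pow_add]
  exact Even.neg_one_pow ⟨c, rfl⟩

lemma e_comm_prodE (i : Fin 5) (l : List (Fin 5)) :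
    ee i * prodE l = ((-1 : ℝ) ^ (l.countP (fun j => j ≠ i))) • (prodE l * ee i) := by
  induction l with
  | nil => simp
  | cons j t ih =>
    have hswap : prodE t * ee i = ((-1 : ℝ) ^ (t.countP (fun j => j ≠ i))) • (ee i * prodE t) := by
      rw [ih, smul_smul, neg_one_pow_mul_self, one_smul]
    rcases eq_or_ne j i with rfl | hji
    · rw [List.countP_cons]
      simp only [decide_not, prodE_cons]
      rw [mul_assoc, hswap]
      simp [smul_smul, neg_one_pow_mul_self, mul_smul_comm]
    · rw [List.countP_cons]
      have hd : (decide ¬(j = i)) = true := by simp [hji]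
      simp only [decide_not, hd, if_pos, prodE_cons]
      rw [← mul_assoc, e_anti (Ne.symm hji), neg_mul, mul_assoc, ih,
        mul_smul_comm, mul_assoc]
      rw [pow_succ]
      simp [smul_smul]

def IsSign (s : ℝ) : Prop := s = 1 ∨ s = -1

lemma IsSign.mul {s t : ℝ} (hs : IsSign s) (ht : IsSign t) : IsSign (s * t) := by
  rcases hs with rfl | rfl <;> rcases ht with rfl | rfl <;> simp [IsSign]

lemma IsSign.neg {s : ℝ} (hs : IsSign s) : IsSign (-s) := by
  rcases hs with rfl | rfl <;> simp [IsSign]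

lemma IsSign.ne_zero {s : ℝ} (hs : IsSign s) : s ≠ 0 := by
  rcases hs with rfl | rfl <;> norm_num

lemma isSign_neg_one_pow (c : ℕ) : IsSign ((-1 : ℝ) ^ c) := by
  rcases Nat.even_or_odd c with h | h
  · exact Or.inl h.neg_one_pow
  · exact Or.inr h.neg_one_pow

lemma key_ins (i : Fin 5) (A C : List (Fin 5)) :
    ∃ s : ℝ, IsSign s ∧ ee i * prodE (A ++ C) = s • prodE (A ++ i :: C) := by
  refine ⟨_, isSign_neg_one_pow (A.countP (fun j => j ≠ i)), ?_⟩
  rw [prodE_append, prodE_append, prodE_cons, ← mul_assoc, e_comm_prodE,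
    smul_mul_assoc, mul_assoc]

lemma key_del (i : Fin 5) (A C : List (Fin 5)) :
    ∃ s : ℝ, IsSign s ∧ ee i * prodE (A ++ i :: C) = s • prodE (A ++ C) := by
  refine ⟨_, (isSign_neg_one_pow (A.countP (fun j => j ≠ i))).neg, ?_⟩
  rw [prodE_append, prodE_append, prodE_cons, ← mul_assoc, ← mul_assoc, e_comm_prodE,
    smul_mul_assoc, smul_mul_assoc, mul_assoc, mul_assoc, e_sq', neg_smul, mul_neg, smul_neg]

lemma zmod2_cases (x : ZMod 2) : x = 0 ∨ x = 1 := by fin_cases x <;> simp <;> [exact Or.inl rfl; exact Or.inr rfl]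

lemma key1_aux (i : Fin 5) (b : G5) (L R : List (Fin 5))
    (hsplit : List.finRange 5 = L ++ i :: R)
    (hiL : i ∉ L) (hiR : i ∉ R) :
    ∃ s : ℝ, IsSign s ∧ ee i * eb b = s • eb (b + dd i) := by
  have hfc : ∀ (l : List (Fin 5)), i ∉ l →
      l.filter (fun j => decide ((b + dd i) j = 1)) = l.filter (fun j => decide (b j = 1)) := by
    intro l hl
    apply List.filter_congr
    intro x hx
    have hxi : x ≠ i := fun h => hl (h ▸ hx)
    have hx2 : (b + dd i) x = b x := by simp [dd, hxi]
    rw [hx2]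
  have hbi1 : (b + dd i) i = b i + 1 := by simp [dd]
  have hlstb : lst b = L.filter (fun j => decide (b j = 1))
      ++ (if b i = 1 then i :: R.filter (fun j => decide (b j = 1))
          else R.filter (fun j => decide (b j = 1))) := by
    rw [lst, hsplit, List.filter_append, List.filter_cons]
    rcases zmod2_cases (b i) with h | h
    · have hc : decide (b i = 1) = false := by simp [h]
      have hc' : ¬ (b i = 1) := by simp [h]
      simp only [hc, Bool.false_eq_true, if_false, if_neg hc']
    · have hc : decide (b i = 1) = true := by simp [h]
      simp only [hc, if_true, if_pos h]
  have hlstb' : lst (b + dd i) = L.filter (fun j => decide (b j = 1))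
      ++ (if b i = 1 then R.filter (fun j => decide (b j = 1))
          else i :: R.filter (fun j => decide (b j = 1))) := by
    rw [lst, hsplit, List.filter_append, List.filter_cons, hfc L hiL, hfc R hiR]
    rcases zmod2_cases (b i) with h | h
    · have hc : decide ((b + dd i) i = 1) = true := by
        simp [hbi1, h]
      have hc' : ¬ (b i = 1) := by simp [h]
      simp only [hc, if_true, if_neg hc']
    · have hc : decide ((b + dd i) i = 1) = false := by
        simp only [hbi1, h, decide_eq_false_iff_not]
        decide
      simp only [hc, Bool.false_eq_true, if_false, if_pos h]
  rcases zmod2_cases (b i) with h | h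
  · have hne : ¬ (b i = 1) := by rw [h]; decide
    rw [eb, eb, hlstb, hlstb', if_neg hne, if_neg hne]
    exact key_ins i _ _
  · rw [eb, eb, hlstb, hlstb', if_pos h, if_pos h]
    exact key_del i _ _

lemma key1 (i : Fin 5) (b : G5) :
    ∃ s : ℝ, IsSign s ∧ ee i * eb b = s • eb (b + dd i) := by
  fin_cases i
  · exact key1_aux 0 b [] [1,2,3,4] (by decide) (by decide) (by decide)
  · exact key1_aux 1 b [0] [2,3,4] (by decide) (by decide) (by decide)
  · exact key1_aux 2 b [0,1] [3,4] (by decide) (by decide) (by decide)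
  · exact key1_aux 3 b [0,1,2] [4] (by decide) (by decide) (by decide)
  · exact key1_aux 4 b [0,1,2,3] [] (by decide) (by decide) (by decide)

def gOf : List (Fin 5) → G5 := fun l => l.foldr (fun i acc => dd i + acc) 0

@[simp] lemma gOf_nil : gOf [] = 0 := rfl
@[simp] lemma gOf_cons (i : Fin 5) (l : List (Fin 5)) : gOf (i :: l) = dd i + gOf l := rfl

lemma gOf_apply (l : List (Fin 5)) (hl : l.Nodup) (j : Fin 5) :
    gOf l j = if j ∈ l then 1 else 0 := by
  induction l with
  | nil => simp
  | cons i t ih =>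
    have hnd := (List.nodup_cons.mp hl)
    rcases eq_or_ne j i with rfl | hji
    · simp [dd, ih hnd.2, hnd.1]
    · simp [dd, hji, ih hnd.2]

lemma mem_lst (b : G5) (j : Fin 5) : j ∈ lst b ↔ b j = 1 := by
  simp [lst]

lemma nodup_lst (b : G5) : (lst b).Nodup := (List.nodup_finRange 5).filter _

lemma gOf_lst (b : G5) : gOf (lst b) = b := by
  funext j
  rw [gOf_apply _ (nodup_lst b) j]
  rcases zmod2_cases (b j) with h | h
  · rw [if_neg, h]
    rw [mem_lst, h]
    decide
  · rw [if_pos, h]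
    rw [mem_lst, h]

lemma prod_mul_eb (l : List (Fin 5)) (b : G5) :
    ∃ s : ℝ, IsSign s ∧ prodE l * eb b = s • eb (gOf l + b) := by
  induction l with
  | nil => exact ⟨1, Or.inl rfl, by simp⟩
  | cons i t ih =>
    obtain ⟨s, hs, he⟩ := ih
    obtain ⟨s', hs', he'⟩ := key1 i (gOf t + b)
    refine ⟨s * s', hs.mul hs', ?_⟩
    rw [prodE_cons, mul_assoc, he, mul_smul_comm, he', smul_smul]
    congr 2
    funext j
    simp [dd, add_comm, add_assoc, add_left_comm]

lemma mul_eb (a b : G5) :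
    ∃ s : ℝ, IsSign s ∧ eb a * eb b = s • eb (a + b) := by
  obtain ⟨s, hs, he⟩ := prod_mul_eb (lst a) b
  rw [gOf_lst] at he
  exact ⟨s, hs, he⟩

lemma eb_zero : eb 0 = 1 := rfl

lemma eb_dd (i : Fin 5) : eb (dd i) = ee i := by
  have h : lst (dd i) = [i] := by
    fin_cases i <;> rfl
  rw [eb, h]
  simp

lemma stdVec_single (i : Fin 5) : stdVec i = Pi.single i 1 := by
  funext j
  simp [stdVec, Pi.single_apply]

lemma span_eb (x : CliffordAlgebra Q5) : x ∈ Submodule.span ℝ (Set.range eb) := by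
  induction x using CliffordAlgebra.induction with
  | algebraMap r =>
    rw [Algebra.algebraMap_eq_smul_one, ← eb_zero]
    exact Submodule.smul_mem _ _ (Submodule.subset_span ⟨0, rfl⟩)
  | ι m =>
    have h1 : m = ∑ i, m i • stdVec i := by
      have := pi_eq_sum_univ m
      convert this using 2 with i
      funext j
      simp [stdVec, eq_comm]
    have h2 : ι Q5 m = ∑ i, m i • ee i := by
      conv_lhs => rw [h1]
      rw [map_sum]
      simp [ee]
    rw [h2]
    refine Submodule.sum_mem _ (fun i _ => ?_)
    rw [← eb_dd]
    exact Submodule.smul_mem _ _ (Submodule.subset_span ⟨_, rfl⟩)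
  | add a b ha hb => exact Submodule.add_mem _ ha hb
  | mul a b ha hb =>
    induction ha using Submodule.span_induction with
    | mem x hx =>
      obtain ⟨a', rfl⟩ := hx
      induction hb using Submodule.span_induction with
      | mem y hy =>
        obtain ⟨b', rfl⟩ := hy
        obtain ⟨s, hs, he⟩ := mul_eb a' b'
        rw [he]
        exact Submodule.smul_mem _ _ (Submodule.subset_span ⟨_, rfl⟩)
      | zero => simp
      | add y z _ _ hy hz => rw [mul_add]; exact Submodule.add_mem _ hy hz
      | smul c y _ hy => rw [mul_smul_comm]; exact Submodule.smul_mem _ _ hy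
    | zero => simp
    | add y z _ _ hy hz => rw [add_mul]; exact Submodule.add_mem _ hy hz
    | smul c y _ hy => rw [smul_mul_assoc]; exact Submodule.smul_mem _ _ hy

noncomputable def Emap : CliffordAlgebra Q5 →ₗ[ℝ] ExteriorAlgebra ℝ (Fin 5 → ℝ) :=
  changeForm changeForm.associated_neg_proof

noncomputable def lam0 : CliffordAlgebra Q5 →ₗ[ℝ] ℝ :=
  (ExteriorAlgebra.algebraMapInv).toLinearMap ∘ₗ Emap

lemma lam0_one : lam0 1 = 1 := by
  simp [lam0, Emap, changeForm_one]

lemma lam0_algebraMap (r : ℝ) : lam0 (algebraMap ℝ _ r) = r := by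
  simp only [lam0, Emap, LinearMap.comp_apply, changeForm_algebraMap, AlgHom.toLinearMap_apply]
  exact ExteriorAlgebra.algebraMap_leftInverse _ r

lemma algebraMapInv_ι (m : Fin 5 → ℝ) :
    ExteriorAlgebra.algebraMapInv (ExteriorAlgebra.ι ℝ m) = 0 := by
  simp [ExteriorAlgebra.algebraMapInv]

lemma assoc_std {i j : Fin 5} (h : i ≠ j) :
    QuadraticMap.associated (R := ℝ) (-Q5) (stdVec i) (stdVec j) = 0 := by
  rw [QuadraticMap.associated_apply]
  have h1 : (-Q5) (stdVec i + stdVec j) = 2 := by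
    simp only [QuadraticMap.neg_apply, Q5_apply]
    have : ∀ k, (stdVec i k + stdVec j k) * (stdVec i k + stdVec j k)
        = stdVec i k * stdVec i k + stdVec j k * stdVec j k := by
      intro k; nlinarith [sum_std_mul h k]
    simp only [Pi.add_apply, this, Finset.sum_add_distrib]
    have hi : ∑ k, stdVec i k * stdVec i k = 1 := by norm_num [stdVec]
    have hj : ∑ k, stdVec j k * stdVec j k = 1 := by norm_num [stdVec]
    rw [hi, hj]; ring
  have h2 : (-Q5) (stdVec i) = 1 := by
    simp [QuadraticMap.neg_apply, Q5_stdVec]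
  have h3 : (-Q5) (stdVec j) = 1 := by
    simp [QuadraticMap.neg_apply, Q5_stdVec]
  rw [h1, h2, h3]
  norm_num

lemma contract_Emap_zero (l : List (Fin 5)) (f : Module.Dual ℝ (Fin 5 → ℝ))
    (hf : ∀ j ∈ l, f (stdVec j) = 0) :
    contractLeft (Q := (0 : QuadraticForm ℝ (Fin 5 → ℝ))) f (Emap (prodE l)) = 0 := by
  induction l with
  | nil =>
    have h0 : Emap 1 = 1 := by
      rw [Emap]
      exact changeForm_one changeForm.associated_neg_proof
    rw [prodE_nil, h0]
    simp
  | cons i t ih =>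
    have hfi : f (stdVec i) = 0 := hf i List.mem_cons_self
    have ht : ∀ j ∈ t, f (stdVec j) = 0 := fun j hj => hf j (List.mem_cons_of_mem i hj)
    rw [prodE_cons, ee, Emap, changeForm_ι_mul, map_sub, contractLeft_ι_mul]
    have h1 := ih ht
    rw [Emap] at h1
    rw [contractLeft_comm (Q := (0 : QuadraticForm ℝ (Fin 5 → ℝ))), hfi, h1]
    simp

lemma lam0_prodE_cons (i : Fin 5) (t : List (Fin 5)) (h : i ∉ t) :
    lam0 (prodE (i :: t)) = 0 := by
  rw [prodE_cons, ee, lam0, LinearMap.comp_apply, Emap, changeForm_ι_mul, map_sub]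
  have h2 := contract_Emap_zero t (QuadraticMap.associated (R := ℝ) (-Q5) (stdVec i))
    (fun j hj => assoc_std (fun hij => h (hij ▸ hj)))
  rw [Emap] at h2
  rw [h2, map_zero, sub_zero]
  simp only [AlgHom.toLinearMap_apply]
  rw [map_mul]
  rw [show (ι (0 : QuadraticForm ℝ (Fin 5 → ℝ)) (stdVec i)) = ExteriorAlgebra.ι ℝ (stdVec i) from rfl]
  rw [algebraMapInv_ι, zero_mul]

lemma lam0_eb_ne_zero {b : G5} (hb : b ≠ 0) : lam0 (eb b) = 0 := by
  have hne : lst b ≠ [] := by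
    intro h
    apply hb
    funext j
    rcases zmod2_cases (b j) with h0 | h1
    · exact h0
    · exfalso
      have : j ∈ lst b := (mem_lst b j).mpr h1
      rw [h] at this
      exact List.not_mem_nil this
  obtain ⟨i, t, ht⟩ := List.exists_cons_of_ne_nil hne
  have hnd : (lst b).Nodup := nodup_lst b
  rw [ht] at hnd
  rw [eb, ht]
  exact lam0_prodE_cons i t (List.nodup_cons.mp hnd).1

lemma g5_add_self (a : G5) : a + a = 0 := by
  funext j
  rcases zmod2_cases (a j) with h | h <;> simp [h] <;> decide

lemma g5_add_eq_zero {a b : G5} (h : a + b = 0) : a = b := by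
  funext j
  have := congrFun h j
  rcases zmod2_cases (a j) with h1 | h1 <;> rcases zmod2_cases (b j) with h2 | h2 <;>
    simp [h1, h2] at this ⊢ <;> first | rfl | (exfalso; revert this; decide)

lemma lam0_eb_self (a : G5) : ∃ s : ℝ, IsSign s ∧ lam0 (eb a * eb a) = s := by
  obtain ⟨s, hs, he⟩ := mul_eb a a
  refine ⟨s, hs, ?_⟩
  rw [he, g5_add_self, eb_zero, map_smul, lam0_one, smul_eq_mul, mul_one]

lemma lam0_eb_mul_ne {a b : G5} (h : a ≠ b) : lam0 (eb a * eb b) = 0 := by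
  obtain ⟨s, hs, he⟩ := mul_eb a b
  have : a + b ≠ 0 := fun hab => h (g5_add_eq_zero hab)
  rw [he, map_smul, lam0_eb_ne_zero this, smul_zero]

lemma eb_coef_unique {c c' : G5 → ℝ} (h : ∑ b, c b • eb b = ∑ b, c' b • eb b) : c = c' := by
  funext a
  obtain ⟨s, hs, hse⟩ := lam0_eb_self a
  have key : ∀ d : G5 → ℝ, lam0 (eb a * ∑ b, d b • eb b) = d a * s := by
    intro d
    rw [Finset.mul_sum]
    simp_rw [mul_smul_comm]
    rw [map_sum]
    simp_rw [map_smul]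
    rw [Finset.sum_eq_single a]
    · rw [hse, smul_eq_mul]
    · intro b _ hb
      rw [lam0_eb_mul_ne (Ne.symm hb), smul_zero]
    · intro hb
      exact absurd (Finset.mem_univ a) hb
  have h1 := key c
  have h2 := key c'
  rw [h] at h1
  rw [h1] at h2
  exact (mul_right_cancel₀ hs.ne_zero h2.symm).symm

lemma eb_ne_zero (b : G5) : eb b ≠ 0 := by
  intro h
  obtain ⟨s, hs, hse⟩ := lam0_eb_self b
  rw [h, mul_zero, map_zero] at hse
  exact hs.ne_zero hse.symm

def fullG : G5 := fun _ => 1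

lemma lst_full : lst fullG = [0, 1, 2, 3, 4] := by rfl

lemma omega_mem_odd : eb fullG ∈ evenOdd Q5 1 := by
  rw [eb, lst_full]
  have h4 : prodE [4] = ee 4 := by simp
  have : prodE [0,1,2,3,4] = (ee 0 * ee 1) * ((ee 2 * ee 3) * ee 4) := by
    simp [mul_assoc]
  rw [this]
  have h01 : ee 0 * ee 1 ∈ evenOdd Q5 0 := ι_mul_ι_mem_evenOdd_zero Q5 _ _
  have h23 : ee 2 * ee 3 ∈ evenOdd Q5 0 := ι_mul_ι_mem_evenOdd_zero Q5 _ _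
  have h4' : ee 4 ∈ evenOdd Q5 1 := ι_mem_evenOdd_one Q5 _
  have h234 : (ee 2 * ee 3) * ee 4 ∈ evenOdd Q5 (0 + 1) := SetLike.mul_mem_graded h23 h4'
  have := SetLike.mul_mem_graded h01 h234
  norm_num at this
  exact this

lemma exists_one_of_ne_zero {b : G5} (hb : b ≠ 0) : ∃ i, b i = 1 := by
  by_contra h
  push_neg at h
  apply hb
  funext j
  rcases zmod2_cases (b j) with h0 | h1
  · exact h0
  · exact absurd h1 (h j)

lemma exists_zero_of_ne_full {b : G5} (hb : b ≠ fullG) : ∃ i, b i = 0 := by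
  by_contra h
  push_neg at h
  apply hb
  funext j
  rcases zmod2_cases (b j) with h0 | h1
  · exact absurd h0 (h j)
  · exact h1

theorem central_is_pm_one (z : CliffordAlgebra Q5)
    (hcomm : ∀ i : Fin 5, ee i * z = z * ee i)
    (heven : z ∈ even Q5) (hstar : z * star z = 1) : z = 1 ∨ z = -1 := by
  obtain ⟨c, hc⟩ := (Submodule.mem_span_range_iff_exists_fun ℝ).mp (span_eb z)
  -- commutation relations on coefficients
  have hmain : ∀ (i : Fin 5) (b : G5),
      c b * ((-1 : ℝ) ^ ((lst b).countP (fun j => j ≠ i))) = c b := by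
    intro i
    have h1 : ee i * z = (∑ b, (c b * ((-1 : ℝ) ^ ((lst b).countP (fun j => j ≠ i)))) • eb b) * ee i := by
      rw [← hc, Finset.mul_sum, Finset.sum_mul]
      congr 1
      funext b
      rw [mul_smul_comm, eb, e_comm_prodE i (lst b), smul_smul, mul_comm (c b), ← smul_mul_assoc]
    have h2 : ee i * z = (∑ b, c b • eb b) * ee i := by rw [hcomm i, hc]
    have h3 : (∑ b, (c b * ((-1 : ℝ) ^ ((lst b).countP (fun j => j ≠ i)))) • eb b)
        = ∑ b, c b • eb b := by
      have h4 := h1.symm.trans h2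
      have h5 := congrArg (· * ee i) h4
      simp only [mul_assoc, e_sq, mul_neg, mul_one] at h5
      exact neg_injective h5
    exact fun b => congrFun (eb_coef_unique h3) b
  -- coefficients vanish off {0, full}
  have hzero : ∀ b : G5, b ≠ 0 → b ≠ fullG → c b = 0 := by
    intro b hb0 hbf
    by_contra hcb
    obtain ⟨i, hi⟩ := exists_one_of_ne_zero hb0
    obtain ⟨i', hi'⟩ := exists_zero_of_ne_full hbf
    have hsign : ∀ j : Fin 5, ((-1 : ℝ) ^ ((lst b).countP (fun k => k ≠ j))) = 1 := by
      intro j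
      have hmj := hmain j b
      nth_rewrite 2 [← mul_one (c b)] at hmj
      exact mul_left_cancel₀ hcb hmj
    have hmem : i ∈ lst b := (mem_lst b i).mpr hi
    have hmem' : i' ∉ lst b := by
      rw [mem_lst, hi']
      decide
    obtain ⟨A, C, hAC⟩ := List.append_of_mem hmem
    have hnd : (lst b).Nodup := nodup_lst b
    rw [hAC] at hnd
    have hiC : i ∉ C := by
      have := (hnd.of_append_right : (i :: C).Nodup)
      exact (List.nodup_cons.mp this).1
    have hiA : i ∉ A := by
      have hdisj := List.disjoint_of_nodup_append hnd
      exact fun h => hdisj h List.mem_cons_self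
    have hcnt1 : (lst b).countP (fun k => k ≠ i) = A.length + C.length := by
      rw [hAC, List.countP_append, List.countP_cons]
      have hA : A.countP (fun k => decide (k ≠ i)) = A.length :=
        List.countP_eq_length.mpr (fun a ha => by
          simp only [decide_eq_true_eq]
          exact fun h => hiA (h ▸ ha))
      have hC : C.countP (fun k => decide (k ≠ i)) = C.length :=
        List.countP_eq_length.mpr (fun a ha => by
          simp only [decide_eq_true_eq]
          exact fun h => hiC (h ▸ ha))
      simp only [decide_not] at hA hC
      simp [hA, hC]
    have hcnt2 : (lst b).countP (fun k => k ≠ i') = A.length + C.length + 1 := by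
      have hlen : (lst b).countP (fun k => k ≠ i') = (lst b).length :=
        List.countP_eq_length.mpr (fun a ha => by
          simp only [decide_eq_true_eq]
          exact fun h => hmem' (h ▸ ha))
      rw [hlen, hAC]
      simp [List.length_append]
      omega
    have e1 := hsign i
    have e2 := hsign i'
    rw [hcnt1] at e1
    rw [hcnt2, pow_succ, e1, one_mul] at e2
    norm_num at e2
  have hne0full : (0 : G5) ≠ fullG := by
    intro h
    have := congrFun h 0
    revert this
    decide
  have hsum2 : z = c 0 • (1 : CliffordAlgebra Q5) + c fullG • eb fullG := by
    rw [← hc]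
    have hsub : ({0, fullG} : Finset G5) ⊆ Finset.univ := Finset.subset_univ _
    rw [← Finset.sum_subset hsub (fun b _ hb => ?_)]
    · rw [Finset.sum_pair hne0full, eb_zero]
    · have hb' : b ≠ 0 ∧ b ≠ fullG := by
        constructor <;> intro h <;> apply hb <;> simp [h]
      rw [hzero b hb'.1 hb'.2, zero_smul]
  have hev : z ∈ evenOdd Q5 0 := by
    rw [← Subalgebra.mem_toSubmodule, even_toSubmodule] at heven
    exact heven
  have h1mem : (1 : CliffordAlgebra Q5) ∈ evenOdd Q5 0 := by
    exact Submodule.one_le.mp (one_le_evenOdd_zero Q5)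
  have hfmem0 : c fullG • eb fullG ∈ evenOdd Q5 0 := by
    have heq : c fullG • eb fullG = z - c 0 • 1 := by rw [hsum2]; abel
    rw [heq]
    exact Submodule.sub_mem _ hev (Submodule.smul_mem _ _ h1mem)
  have hfmem1 : c fullG • eb fullG ∈ evenOdd Q5 1 := Submodule.smul_mem _ _ omega_mem_odd
  have hzero2 : c fullG • eb fullG = 0 :=
    Submodule.disjoint_def.mp (evenOdd_isCompl (Q := Q5)).disjoint _ hfmem0 hfmem1
  have hcf : c fullG = 0 := by
    rcases smul_eq_zero.mp hzero2 with h | h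
    · exact h
    · exact absurd h (eb_ne_zero fullG)
  have hz : z = c 0 • 1 := by rw [hsum2, hcf, zero_smul, add_zero]
  have hstar' : star z = c 0 • (1 : CliffordAlgebra Q5) := by
    rw [hz, CliffordAlgebra.star_smul, star_one]
  rw [hstar', hz] at hstar
  rw [smul_mul_assoc, mul_smul_comm, one_mul, smul_smul] at hstar
  have hc2 : c 0 * c 0 = 1 := by
    have := congrArg lam0 hstar
    rw [map_smul, lam0_one, smul_eq_mul, mul_one] at this
    exact this
  rcases mul_self_eq_one_iff.mp hc2 with h | h
  · left; rw [hz, h, one_smul]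
  · right; rw [hz, h, neg_smul, one_smul]

-- ## Concrete computations with `uElt` and `vElt`

lemma ue : uElt = ee 1 * ee 2 * ee 3 * ee 4 := rfl
lemma ve : vElt = ee 0 * ee 1 * ee 2 * ee 4 := rfl

lemma star_ee (i : Fin 5) : star (ee i) = -ee i := by
  rw [ee, CliffordAlgebra.star_ι]

lemma star_u : star uElt = uElt := by
  rw [ue]
  simp [star_mul, star_ee, mul_assoc]

lemma star_v : star vElt = vElt := by
  rw [ve]
  simp [star_mul, star_ee, mul_assoc]

lemma u_mul_u : uElt * uElt = 1 := by
  rw [ue]; simp [mul_assoc]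

lemma v_mul_v : vElt * vElt = 1 := by
  rw [ve]; simp [mul_assoc]

lemma huv : uElt * vElt = -(vElt * uElt) := by
  rw [ue, ve]; simp [mul_assoc]

lemma diag_mulVec_std (v : Fin 5 → ℝ) (i : Fin 5) :
    (Matrix.diagonal v).mulVec (stdVec i) = v i • stdVec i := by
  funext j
  rw [Matrix.mulVec_diagonal]
  simp only [stdVec, Pi.smul_apply, smul_eq_mul]
  rcases eq_or_ne j i with rfl | h
  · simp
  · simp [h]

lemma isLiftOf_of_forall_basis {w : CliffordAlgebra Q5} {Mm : Matrix (Fin 5) (Fin 5) ℝ}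
    (h : ∀ i : Fin 5, w * ee i * star w = ι Q5 (Mm.mulVec (stdVec i))) : IsLiftOf w Mm := by
  intro x
  have h1 : x = ∑ i, x i • stdVec i := by
    have := pi_eq_sum_univ x
    convert this using 2 with i
    funext j
    simp [stdVec, eq_comm]
  have h2 : w * ι Q5 x * star w = ∑ i, x i • (w * ee i * star w) := by
    conv_lhs => rw [h1]
    rw [map_sum]
    simp_rw [map_smul]
    rw [Finset.mul_sum, Finset.sum_mul]
    simp_rw [mul_smul_comm, smul_mul_assoc, ee]
  rw [h2]
  simp_rw [h]
  simp_rw [← Matrix.mulVecLin_apply, ← map_smul, ← map_sum, ← h1]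

lemma lift_u : IsLiftOf uElt Malpha := by
  apply isLiftOf_of_forall_basis
  have H0 : uElt * ee 0 * star uElt = ι Q5 (Malpha.mulVec (stdVec 0)) := by
    rw [star_u, Malpha, diag_mulVec_std,
      show (![1, -1, -1, -1, -1] : Fin 5 → ℝ) 0 = 1 by norm_num, one_smul]
    show uElt * ee 0 * uElt = ee 0
    rw [ue]; simp [mul_assoc]
  have H1 : uElt * ee 1 * star uElt = ι Q5 (Malpha.mulVec (stdVec 1)) := by
    rw [star_u, Malpha, diag_mulVec_std,
      show (![1, -1, -1, -1, -1] : Fin 5 → ℝ) 1 = -1 by norm_num, neg_smul, one_smul, map_neg]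
    show uElt * ee 1 * uElt = -ee 1
    rw [ue]; simp [mul_assoc]
  have H2 : uElt * ee 2 * star uElt = ι Q5 (Malpha.mulVec (stdVec 2)) := by
    rw [star_u, Malpha, diag_mulVec_std,
      show (![1, -1, -1, -1, -1] : Fin 5 → ℝ) 2 = -1 by rfl, neg_smul, one_smul, map_neg]
    show uElt * ee 2 * uElt = -ee 2
    rw [ue]; simp [mul_assoc]
  have H3 : uElt * ee 3 * star uElt = ι Q5 (Malpha.mulVec (stdVec 3)) := by
    rw [star_u, Malpha, diag_mulVec_std,
      show (![1, -1, -1, -1, -1] : Fin 5 → ℝ) 3 = -1 by rfl, neg_smul, one_smul, map_neg]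
    show uElt * ee 3 * uElt = -ee 3
    rw [ue]; simp [mul_assoc]
  have H4 : uElt * ee 4 * star uElt = ι Q5 (Malpha.mulVec (stdVec 4)) := by
    rw [star_u, Malpha, diag_mulVec_std,
      show (![1, -1, -1, -1, -1] : Fin 5 → ℝ) 4 = -1 by rfl, neg_smul, one_smul, map_neg]
    show uElt * ee 4 * uElt = -ee 4
    rw [ue]; simp [mul_assoc]
  intro i
  fin_cases i
  exacts [H0, H1, H2, H3, H4]

lemma lift_v : IsLiftOf vElt Mbeta := by
  apply isLiftOf_of_forall_basis
  have H0 : vElt * ee 0 * star vElt = ι Q5 (Mbeta.mulVec (stdVec 0)) := by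
    rw [star_v, Mbeta, diag_mulVec_std,
      show (![-1, -1, -1, 1, -1] : Fin 5 → ℝ) 0 = -1 by norm_num, neg_smul, one_smul, map_neg]
    show vElt * ee 0 * vElt = -ee 0
    rw [ve]; simp [mul_assoc]
  have H1 : vElt * ee 1 * star vElt = ι Q5 (Mbeta.mulVec (stdVec 1)) := by
    rw [star_v, Mbeta, diag_mulVec_std,
      show (![-1, -1, -1, 1, -1] : Fin 5 → ℝ) 1 = -1 by norm_num, neg_smul, one_smul, map_neg]
    show vElt * ee 1 * vElt = -ee 1
    rw [ve]; simp [mul_assoc]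
  have H2 : vElt * ee 2 * star vElt = ι Q5 (Mbeta.mulVec (stdVec 2)) := by
    rw [star_v, Mbeta, diag_mulVec_std,
      show (![-1, -1, -1, 1, -1] : Fin 5 → ℝ) 2 = -1 by rfl, neg_smul, one_smul, map_neg]
    show vElt * ee 2 * vElt = -ee 2
    rw [ve]; simp [mul_assoc]
  have H3 : vElt * ee 3 * star vElt = ι Q5 (Mbeta.mulVec (stdVec 3)) := by
    rw [star_v, Mbeta, diag_mulVec_std,
      show (![-1, -1, -1, 1, -1] : Fin 5 → ℝ) 3 = 1 by rfl, one_smul]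
    show vElt * ee 3 * vElt = ee 3
    rw [ve]; simp [mul_assoc]
  have H4 : vElt * ee 4 * star vElt = ι Q5 (Mbeta.mulVec (stdVec 4)) := by
    rw [star_v, Mbeta, diag_mulVec_std,
      show (![-1, -1, -1, 1, -1] : Fin 5 → ℝ) 4 = -1 by rfl, neg_smul, one_smul, map_neg]
    show vElt * ee 4 * vElt = -ee 4
    rw [ve]; simp [mul_assoc]
  intro i
  fin_cases i
  exacts [H0, H1, H2, H3, H4]

lemma isLiftOf_neg {w : CliffordAlgebra Q5} {Mm : Matrix (Fin 5) (Fin 5) ℝ}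
    (h : IsLiftOf w Mm) : IsLiftOf (-w) Mm := by
  intro x
  simp only [star_neg, neg_mul, mul_neg, neg_neg]
  exact h x

-- ## spin group membership

noncomputable def eU (i : Fin 5) : (CliffordAlgebra Q5)ˣ :=
  ⟨ee i, -ee i, by simp [mul_neg], by simp [neg_mul]⟩

lemma eU_mem (i : Fin 5) : eU i ∈ lipschitzGroup Q5 :=
  Subgroup.subset_closure ⟨stdVec i, rfl⟩

lemma pair_mem_even (i j : Fin 5) : ee i * ee j ∈ even Q5 := by
  rw [← Subalgebra.mem_toSubmodule, even_toSubmodule]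
  exact ι_mul_ι_mem_evenOdd_zero Q5 _ _

lemma u_mem_spin : uElt ∈ spinGroup Q5 := by
  rw [spinGroup.mem_iff]
  refine ⟨pinGroup.mem_iff.mpr ⟨?_, ?_⟩, ?_⟩
  · exact ⟨eU 1 * eU 2 * eU 3 * eU 4,
      mul_mem (mul_mem (mul_mem (eU_mem 1) (eU_mem 2)) (eU_mem 3)) (eU_mem 4), rfl⟩
  · rw [Unitary.mem_iff]
    exact ⟨by rw [star_u, u_mul_u], by rw [star_u, u_mul_u]⟩
  · rw [show uElt = (ee 1 * ee 2) * (ee 3 * ee 4) by rw [ue, mul_assoc (ee 1 * ee 2)]]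
    exact mul_mem (pair_mem_even 1 2) (pair_mem_even 3 4)

lemma v_mem_spin : vElt ∈ spinGroup Q5 := by
  rw [spinGroup.mem_iff]
  refine ⟨pinGroup.mem_iff.mpr ⟨?_, ?_⟩, ?_⟩
  · exact ⟨eU 0 * eU 1 * eU 2 * eU 4,
      mul_mem (mul_mem (mul_mem (eU_mem 0) (eU_mem 1)) (eU_mem 2)) (eU_mem 4), rfl⟩
  · rw [Unitary.mem_iff]
    exact ⟨by rw [star_v, v_mul_v], by rw [star_v, v_mul_v]⟩
  · rw [show vElt = (ee 0 * ee 1) * (ee 2 * ee 4) by rw [ve, mul_assoc (ee 0 * ee 1)]]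
    exact mul_mem (pair_mem_even 0 1) (pair_mem_even 2 4)

lemma neg_one_mem_spin : (-1 : CliffordAlgebra Q5) ∈ spinGroup Q5 := by
  rw [spinGroup.mem_iff]
  refine ⟨pinGroup.mem_iff.mpr ⟨?_, ?_⟩, ?_⟩
  · exact ⟨eU 0 * eU 0, mul_mem (eU_mem 0) (eU_mem 0), by
      show ee 0 * ee 0 = -1
      exact e_sq 0⟩
  · rw [Unitary.mem_iff]
    constructor <;> simp
  · exact neg_mem (one_mem _)

lemma neg_mem_spin {w : CliffordAlgebra Q5} (h : w ∈ spinGroup Q5) :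
    -w ∈ spinGroup Q5 := by
  rw [show -w = (-1 : CliffordAlgebra Q5) * w by rw [neg_one_mul]]
  exact mul_mem neg_one_mem_spin h

-- ## uniqueness of lifts

lemma lift_forward {w u0 : CliffordAlgebra Q5} (hw : w ∈ spinGroup Q5)
    (hu : u0 ∈ spinGroup Q5) (hsu : star u0 = u0) (huu : u0 * u0 = 1)
    {Mm : Matrix (Fin 5) (Fin 5) ℝ} (hlw : IsLiftOf w Mm) (hlu : IsLiftOf u0 Mm)
    (hMM : ∀ x, Mm.mulVec (Mm.mulVec x) = x) : w = u0 ∨ w = -u0 := by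
  have hz_spin : w * u0 ∈ spinGroup Q5 := mul_mem hw hu
  have hz_even : w * u0 ∈ even Q5 := spinGroup.mem_even hz_spin
  have hstar_z : w * u0 * star (w * u0) = 1 := spinGroup.mul_star_self_of_mem hz_spin
  have hzstar : star (w * u0) * (w * u0) = 1 := spinGroup.star_mul_self_of_mem hz_spin
  have h2 : ∀ x : Fin 5 → ℝ, u0 * ι Q5 x * u0 = ι Q5 (Mm.mulVec x) := by
    intro x
    have := hlu x
    rwa [hsu] at this
  have hcent : ∀ x : Fin 5 → ℝ, (w * u0) * ι Q5 x = ι Q5 x * (w * u0) := by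
    intro x
    have h1 : (w * u0) * ι Q5 x * star (w * u0) = ι Q5 x := by
      rw [star_mul, hsu]
      calc w * u0 * ι Q5 x * (u0 * star w)
          = w * (u0 * ι Q5 x * u0) * star w := by noncomm_ring
        _ = w * ι Q5 (Mm.mulVec x) * star w := by rw [h2]
        _ = ι Q5 (Mm.mulVec (Mm.mulVec x)) := hlw _
        _ = ι Q5 x := by rw [hMM]
    calc (w * u0) * ι Q5 x
        = (w * u0) * ι Q5 x * (star (w * u0) * (w * u0)) := by rw [hzstar, mul_one]
      _ = ((w * u0) * ι Q5 x * star (w * u0)) * (w * u0) := by rw [← mul_assoc]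
      _ = ι Q5 x * (w * u0) := by rw [h1]
  have hpm := central_is_pm_one (w * u0) (fun i => (hcent (stdVec i)).symm) hz_even hstar_z
  have hw_eq : w = (w * u0) * u0 := by rw [mul_assoc, huu, mul_one]
  rcases hpm with h | h
  · left; rw [hw_eq, h, one_mul]
  · right; rw [hw_eq, h, neg_one_mul]

lemma malpha_invol : ∀ x, Malpha.mulVec (Malpha.mulVec x) = x := by
  intro x
  funext j
  rw [Malpha, Matrix.mulVec_diagonal, Matrix.mulVec_diagonal]
  fin_cases j <;> norm_num

lemma mbeta_invol : ∀ x, Mbeta.mulVec (Mbeta.mulVec x) = x := by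
  intro x
  funext j
  rw [Mbeta, Matrix.mulVec_diagonal, Matrix.mulVec_diagonal]
  fin_cases j <;> norm_num

lemma uv_ne : uElt * vElt ≠ vElt * uElt := by
  intro h
  have hx : uElt * vElt = -(uElt * vElt) := by
    conv_lhs => rw [huv]
    rw [h]
  have h2 : (2 : ℝ) • (uElt * vElt) = 0 := by
    rw [two_smul]
    nth_rewrite 2 [hx]
    exact add_neg_cancel _
  have h3 : uElt * vElt = 0 := by
    rcases smul_eq_zero.mp h2 with h' | h'
    · norm_num at h'
    · exact h'
  have h4 : vElt = 0 := by
    calc vElt = (uElt * uElt) * vElt := by rw [u_mul_u, one_mul]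
      _ = uElt * (uElt * vElt) := by rw [mul_assoc]
      _ = 0 := by rw [h3, mul_zero]
  have := v_mul_v
  rw [h4, mul_zero] at this
  exact zero_ne_one this

/-- The preimages under `𝔭 : Spin(5) → SO(5)` of `M_α` and `M_β` are
`{± e₂e₃e₄e₅}` and `{± e₁e₂e₃e₅}` respectively, and any choices of lifts
`M̂_α`, `M̂_β` anticommute: `M̂_α · M̂_β = - M̂_β · M̂_α`; in particular no choice of
lifts commutes. -/
theorem stmt11 :
    (∀ w ∈ spinGroup Q5, (IsLiftOf w Malpha ↔ (w = uElt ∨ w = -uElt))) ∧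
    (∀ w ∈ spinGroup Q5, (IsLiftOf w Mbeta ↔ (w = vElt ∨ w = -vElt))) ∧
    uElt ∈ spinGroup Q5 ∧ -uElt ∈ spinGroup Q5 ∧
    vElt ∈ spinGroup Q5 ∧ -vElt ∈ spinGroup Q5 ∧
    (∀ w w' : CliffordAlgebra Q5, (w = uElt ∨ w = -uElt) → (w' = vElt ∨ w' = -vElt) →
      w * w' = -(w' * w) ∧ w * w' ≠ w' * w) := by
  refine ⟨?_, ?_, u_mem_spin, neg_mem_spin u_mem_spin, v_mem_spin, neg_mem_spin v_mem_spin, ?_⟩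
  · intro w hw
    constructor
    · intro hl
      exact lift_forward hw u_mem_spin star_u u_mul_u hl lift_u malpha_invol
    · rintro (rfl | rfl)
      · exact lift_u
      · exact isLiftOf_neg lift_u
  · intro w hw
    constructor
    · intro hl
      exact lift_forward hw v_mem_spin star_v v_mul_v hl lift_v mbeta_invol
    · rintro (rfl | rfl)
      · exact lift_v
      · exact isLiftOf_neg lift_v
  · rintro w w' (rfl | rfl) (rfl | rfl)
    · exact ⟨huv, uv_ne⟩
    · refine ⟨by rw [mul_neg, neg_mul, huv], fun h => uv_ne ?_⟩
      rw [mul_neg, neg_mul, neg_inj] at h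
      exact h
    · refine ⟨by rw [neg_mul, mul_neg, huv], fun h => uv_ne ?_⟩
      rw [mul_neg, neg_mul, neg_inj] at h
      exact h
    · refine ⟨by rw [neg_mul_neg, huv, mul_neg, neg_mul, neg_neg], fun h => uv_ne ?_⟩
      rw [neg_mul_neg, neg_mul_neg] at h
      exact h
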